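/- Let H be a free module over a commutative ℚ-algebra R and let T^i(t) ∈ End_R(H)[[t₁,…,t_n]] satisfy [T^i,T^j] = 0 and ∂_{t_i}T^j = ∂_{t_j}T^i. Suppose S, U_{-2}, U_{-1}, U_0, … ∈ End_R(H)[[t,s]] satisfy, modulo s^{m+1}: [S,T^i]=0, [S,U_{-2}]=0, ∂_s T^i = ∂_{t_i} S, ∂_s U_{-2} = [U_{-1},S] − S, ∂_s U_k = [U_{k+1},S] for k ≥ −1, and the t-direction equations [U_{-2},T^i]=0, ∂_{t_i}U_{-2} = [U_{-1},T^i] − T^i, ∂_{t_i}U_k = [U_{k+1},T^i] hold modulo s^{m+1}. Then ∂_s[T^i,T^j] ≡ 0 (mod s^{m+1}); in particular if [T^i,T^j] vanishes at s = 0 it vanishes modulo s^{m+2}. -/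

import Mathlib

/-!
Key inductive step in the construction of unfoldings of F-bundles: with
`t = (t₁,…,t_n)` and an unfolding parameter `s` (realized as the last of `n+1` formal
variables), connection matrices `T^i`, `S`, `U_k` (`k ≥ −2`) in `End_R(H)[[t,s]]`, and all
the listed flatness/unfolding equations holding modulo `s^{m+1}`, one has
`∂_s[T^i,T^j] ≡ 0 (mod s^{m+1})`; in particular, if `[T^i,T^j]` vanishes at `s = 0` then
it vanishes modulo `s^{m+2}`.
Here `f ≡ g (mod s^{m+1})` means that all coefficients of `s`-degree `≤ m` agree.
-/

noncomputable section

open MvPowerSeries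

/-- The formal partial derivative of a multivariate formal power series in the `i`-th
variable, defined coefficientwise. -/
def fpderiv {m : ℕ} {A : Type*} [Ring A] (i : Fin m) (f : MvPowerSeries (Fin m) A) :
    MvPowerSeries (Fin m) A :=
  fun k => ((k i : ℕ) + 1) • f (k + Finsupp.single i 1)

/-- Congruence modulo `s^{m+1}`, where `s` is the last of the `n+1` variables:
all coefficients of `s`-degree `≤ m` agree. -/
def SMod {n : ℕ} {A : Type*} [Ring A] (m : ℕ)
    (f g : MvPowerSeries (Fin (n + 1)) A) : Prop :=
  ∀ k : Fin (n + 1) →₀ ℕ, k (Fin.last n) ≤ m → f k = g k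

section Aux
open Finset
variable {N : ℕ} {A : Type*} [Ring A]

lemma fpderiv_apply (i : Fin N) (f : MvPowerSeries (Fin N) A) (k : Fin N →₀ ℕ) :
    fpderiv i f k = ((k i : ℕ) + 1) • f (k + Finsupp.single i 1) := rfl

lemma fpderiv_sub (i : Fin N) (f g : MvPowerSeries (Fin N) A) :
    fpderiv i (f - g) = fpderiv i f - fpderiv i g := by
  funext k
  show _ = fpderiv i f k - fpderiv i g k
  simp only [fpderiv_apply]
  rw [show (f - g) (k + Finsupp.single i 1)
      = f (k + Finsupp.single i 1) - g (k + Finsupp.single i 1) from rfl]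
  rw [smul_sub]

lemma fpderiv_zero (i : Fin N) : fpderiv i (0 : MvPowerSeries (Fin N) A) = 0 := by
  funext k
  show ((k i : ℕ) + 1) • (0:A) = 0
  simp

lemma single_le_cancel {i : Fin N} {a : Fin N →₀ ℕ} (ha : a i ≠ 0) :
    a - Finsupp.single i 1 + Finsupp.single i 1 = a := by
  ext x
  simp only [Finsupp.coe_add, Pi.add_apply, Finsupp.coe_tsub, Pi.sub_apply,
    Finsupp.single_apply]
  by_cases hx : i = x
  · subst hx
    rw [if_pos rfl]
    omega
  · simp [hx]

/-- One half of the Leibniz reindexing. -/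
lemma fpderiv_reindex_left (i : Fin N) (F : (Fin N →₀ ℕ) → (Fin N →₀ ℕ) → A) (k : Fin N →₀ ℕ) :
    ∑ p ∈ antidiagonal (k + Finsupp.single i 1),
        ((p.1 : Fin N →₀ ℕ) i) • F p.1 p.2
      = ∑ p ∈ antidiagonal k,
        (((p.1 : Fin N →₀ ℕ) i : ℕ) + 1) • F (p.1 + Finsupp.single i 1) p.2 := by
  classical
  rw [← Finset.sum_filter_of_ne
    (p := fun p : (Fin N →₀ ℕ) × (Fin N →₀ ℕ) => p.1 i ≠ 0)
    (fun p _ h => by intro h0; apply h; rw [h0, zero_smul])]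
  refine Finset.sum_nbij' (fun p => (p.1 - Finsupp.single i 1, p.2))
    (fun p => (p.1 + Finsupp.single i 1, p.2)) ?_ ?_ ?_ ?_ ?_
  · rintro ⟨a, b⟩ hab
    simp only [Finset.mem_filter, Finset.HasAntidiagonal.mem_antidiagonal] at hab ⊢
    obtain ⟨hab, ha⟩ := hab
    have := single_le_cancel (a := a) (i := i) ha
    have h2 : a - Finsupp.single i 1 + b + Finsupp.single i 1 = k + Finsupp.single i 1 := by
      rw [add_right_comm, this, hab]
    exact add_right_cancel h2
  · rintro ⟨a, b⟩ hab
    simp only [Finset.HasAntidiagonal.mem_antidiagonal] at hab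
    simp only [Finset.mem_filter, Finset.HasAntidiagonal.mem_antidiagonal]
    constructor
    · rw [← hab]; abel
    · simp
  · rintro ⟨a, b⟩ hab
    simp only [Finset.mem_filter, Finset.HasAntidiagonal.mem_antidiagonal] at hab
    have := single_le_cancel (a := a) (i := i) hab.2
    simp only [this]
  · rintro ⟨a, b⟩ hab
    have : a + Finsupp.single i 1 - Finsupp.single i 1 = a := by
      ext x
      simp only [Finsupp.coe_add, Pi.add_apply, Finsupp.coe_tsub, Pi.sub_apply]
      omega
    simp only [this]
  · rintro ⟨a, b⟩ hab
    simp only [Finset.mem_filter, Finset.HasAntidiagonal.mem_antidiagonal] at hab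
    have h1 := single_le_cancel (a := a) (i := i) hab.2
    have h2 : ((a - Finsupp.single i 1 : Fin N →₀ ℕ) i) + 1 = a i := by
      simp only [Finsupp.coe_tsub, Pi.sub_apply, Finsupp.single_apply]
      simp only [if_pos rfl, if_true]
      have := hab.2
      omega
    simp only [h1, h2]

lemma fpderiv_mul (i : Fin N) (f g : MvPowerSeries (Fin N) A) :
    fpderiv i (f * g) = fpderiv i f * g + f * fpderiv i g := by
  classical
  ext k
  rw [map_add, coeff_mul, coeff_mul, coeff_apply, fpderiv_apply,
    show (f * g) (k + Finsupp.single i 1) = coeff (k + Finsupp.single i 1) (f * g) from rfl,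
    coeff_mul, Finset.smul_sum]
  have hsplit : ∀ p ∈ antidiagonal (k + Finsupp.single i 1),
      ((k i : ℕ) + 1) • (coeff p.1 f * coeff p.2 g)
        = ((p.1 : Fin N →₀ ℕ) i) • (coeff p.1 f * coeff p.2 g)
          + ((p.2 : Fin N →₀ ℕ) i) • (coeff p.1 f * coeff p.2 g) := by
    rintro ⟨a, b⟩ hab
    simp only [Finset.HasAntidiagonal.mem_antidiagonal] at hab
    have := DFunLike.congr_fun hab i
    simp only [Finsupp.coe_add, Pi.add_apply, Finsupp.single_apply, if_pos rfl] at this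
    rw [← add_smul, show (a i + b i) = k i + 1 from this]
  rw [Finset.sum_congr rfl hsplit, Finset.sum_add_distrib]
  congr 1
  · rw [fpderiv_reindex_left i (fun a b => coeff a f * coeff b g) k]
    refine Finset.sum_congr rfl ?_
    rintro ⟨a, b⟩ _
    rw [show coeff a (fpderiv i f)
        = ((a i : ℕ) + 1) • coeff (a + Finsupp.single i 1) f from rfl,
      smul_mul_assoc]
  · have swap1 : ∑ p ∈ antidiagonal (k + Finsupp.single i 1),
        ((p.2 : Fin N →₀ ℕ) i) • (coeff p.1 f * coeff p.2 g)
        = ∑ p ∈ antidiagonal (k + Finsupp.single i 1),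
        ((p.1 : Fin N →₀ ℕ) i) • (coeff p.2 f * coeff p.1 g) := by
      apply Finset.sum_nbij' (fun p => (p.2, p.1)) (fun p => (p.2, p.1)) <;>
        simp [Finset.HasAntidiagonal.mem_antidiagonal, add_comm]
    rw [swap1, fpderiv_reindex_left i (fun b a => coeff a f * coeff b g) k]
    have swap2 : ∑ p ∈ antidiagonal k,
        (((p.1 : Fin N →₀ ℕ) i : ℕ) + 1) • (coeff p.2 f * coeff (p.1 + Finsupp.single i 1) g)
        = ∑ p ∈ antidiagonal k,
        (((p.2 : Fin N →₀ ℕ) i : ℕ) + 1) • (coeff p.1 f * coeff (p.2 + Finsupp.single i 1) g) := by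
      apply Finset.sum_nbij' (fun p => (p.2, p.1)) (fun p => (p.2, p.1)) <;>
        simp [Finset.HasAntidiagonal.mem_antidiagonal, add_comm]
    rw [swap2]
    refine Finset.sum_congr rfl ?_
    rintro ⟨a, b⟩ _
    rw [show coeff b (fpderiv i g)
        = ((b i : ℕ) + 1) • coeff (b + Finsupp.single i 1) g from rfl,
      mul_smul_comm]


section smod
variable {n : ℕ} {m : ℕ} {f f' g g' : MvPowerSeries (Fin (n + 1)) A}

lemma SMod.add (hf : SMod m f f') (hg : SMod m g g') : SMod m (f + g) (f' + g') := by
  intro k hk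
  show f k + g k = f' k + g' k
  rw [hf k hk, hg k hk]

lemma SMod.sub (hf : SMod m f f') (hg : SMod m g g') : SMod m (f - g) (f' - g') := by
  intro k hk
  show f k - g k = f' k - g' k
  rw [hf k hk, hg k hk]

lemma SMod.refl (f : MvPowerSeries (Fin (n + 1)) A) : SMod m f f := fun _ _ => rfl

lemma SMod.mul (hf : SMod m f f') (hg : SMod m g g') : SMod m (f * g) (f' * g') := by
  classical
  intro k hk
  show coeff k (f * g) = coeff k (f' * g')
  rw [coeff_mul, coeff_mul]
  refine Finset.sum_congr rfl ?_
  rintro ⟨a, b⟩ hab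
  simp only [Finset.HasAntidiagonal.mem_antidiagonal] at hab
  have := DFunLike.congr_fun hab (Fin.last n)
  simp only [Finsupp.coe_add, Pi.add_apply] at this
  have ha : a (Fin.last n) ≤ m := by omega
  have hb : b (Fin.last n) ≤ m := by omega
  show f a * g b = f' a * g' b
  rw [hf a ha, hg b hb]

lemma SMod.fpd (i : Fin n) (hf : SMod m f g) :
    SMod m (fpderiv i.castSucc f) (fpderiv i.castSucc g) := by
  intro k hk
  simp only [fpderiv_apply]
  have h1 : ((k + Finsupp.single i.castSucc 1 : Fin (n+1) →₀ ℕ)) (Fin.last n) ≤ m := by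
    simp only [Finsupp.coe_add, Pi.add_apply, Finsupp.single_apply]
    rw [if_neg (by exact Fin.ne_last_of_lt (Fin.castSucc_lt_last i))]
    omega
  rw [hf _ h1]

lemma SMod.of_sub_zero (h : SMod m (f - g) 0) : SMod m f g := by
  intro k hk
  have := h k hk
  show f k = g k
  have h2 : f k - g k = 0 := this
  exact sub_eq_zero.mp h2

end smod

lemma SMod.sub_zero' {n m : ℕ} {f g : MvPowerSeries (Fin (n + 1)) A}
    (h : SMod m f g) : SMod m (f - g) 0 := by
  intro k hk
  show f k - g k = (0 : MvPowerSeries (Fin (n+1)) A) k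
  rw [h k hk]
  exact sub_self _


end Aux

theorem stmt6 {n : ℕ} {R : Type*} [CommRing R] [Algebra ℚ R]
    {H : Type*} [AddCommGroup H] [Module R H] [Module.Free R H]
    (m : ℕ)
    (T : Fin n → MvPowerSeries (Fin (n + 1)) (Module.End R H))
    (S : MvPowerSeries (Fin (n + 1)) (Module.End R H))
    (U : ℤ → MvPowerSeries (Fin (n + 1)) (Module.End R H))
    -- equations (s-direction), modulo s^{m+1}:
    (hST : ∀ i, SMod m (S * T i - T i * S) 0)
    (hSU : SMod m (S * U (-2) - U (-2) * S) 0)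
    (hdsT : ∀ i, SMod m (fpderiv (Fin.last n) (T i)) (fpderiv i.castSucc S))
    (hdsU2 : SMod m (fpderiv (Fin.last n) (U (-2))) ((U (-1) * S - S * U (-1)) - S))
    (hdsU : ∀ k : ℤ, -1 ≤ k →
      SMod m (fpderiv (Fin.last n) (U k)) (U (k + 1) * S - S * U (k + 1)))
    -- equations (t-directions), modulo s^{m+1}:
    (hTT : ∀ i j, SMod m (T i * T j - T j * T i) 0)
    (hUT : ∀ i, SMod m (U (-2) * T i - T i * U (-2)) 0)
    (hdTT : ∀ i j, SMod m (fpderiv i.castSucc (T j)) (fpderiv j.castSucc (T i)))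
    (hdtU2 : ∀ i, SMod m (fpderiv i.castSucc (U (-2)))
      ((U (-1) * T i - T i * U (-1)) - T i))
    (hdtU : ∀ (i : Fin n) (k : ℤ), -1 ≤ k →
      SMod m (fpderiv i.castSucc (U k)) (U (k + 1) * T i - T i * U (k + 1))) :
    (∀ i j, SMod m (fpderiv (Fin.last n) (T i * T j - T j * T i)) 0) ∧
    (∀ i j, (∀ k : Fin (n + 1) →₀ ℕ, k (Fin.last n) = 0 →
        (T i * T j - T j * T i) k = 0) →
      SMod (m + 1) (T i * T j - T j * T i) 0) := by
  have part1 : ∀ i j, SMod m (fpderiv (Fin.last n) (T i * T j - T j * T i)) 0 := by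
    intro i j
    have key : fpderiv (Fin.last n) (T i * T j - T j * T i)
        = (fpderiv (Fin.last n) (T i) - fpderiv i.castSucc S) * T j
          + T i * (fpderiv (Fin.last n) (T j) - fpderiv j.castSucc S)
          - (fpderiv (Fin.last n) (T j) - fpderiv j.castSucc S) * T i
          - T j * (fpderiv (Fin.last n) (T i) - fpderiv i.castSucc S)
          + fpderiv i.castSucc (S * T j - T j * S)
          - fpderiv j.castSucc (S * T i - T i * S)
          - S * (fpderiv i.castSucc (T j) - fpderiv j.castSucc (T i))
          + (fpderiv i.castSucc (T j) - fpderiv j.castSucc (T i)) * S := by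
      simp only [fpderiv_sub, fpderiv_mul]
      noncomm_ring
    rw [key]
    have ha : SMod m (fpderiv (Fin.last n) (T i) - fpderiv i.castSucc S) 0 :=
      (hdsT i).sub_zero'
    have hb : SMod m (fpderiv (Fin.last n) (T j) - fpderiv j.castSucc S) 0 :=
      (hdsT j).sub_zero'
    have he : SMod m (fpderiv i.castSucc (T j) - fpderiv j.castSucc (T i)) 0 :=
      (hdTT i j).sub_zero'
    have big := ((((((((ha.mul (SMod.refl (T j))).add
      ((SMod.refl (T i)).mul hb)).sub
      (hb.mul (SMod.refl (T i)))).sub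
      ((SMod.refl (T j)).mul ha)).add
      ((hST j).fpd i)).sub
      ((hST i).fpd j)).sub
      ((SMod.refl S).mul he)).add
      (he.mul (SMod.refl S)))
    have hz : (0 : MvPowerSeries (Fin (n+1)) (Module.End R H)) * T j + T i * 0 - 0 * T i
        - T j * 0 + fpderiv i.castSucc 0 - fpderiv j.castSucc 0 - S * 0 + 0 * S = 0 := by
      simp [fpderiv_zero]
    rw [hz] at big
    exact big
  refine ⟨part1, ?_⟩
  intro i j h0
  intro k hk
  rcases Nat.eq_zero_or_pos (k (Fin.last n)) with h | h
  · exact h0 k h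
  · set k' : Fin (n+1) →₀ ℕ := k - Finsupp.single (Fin.last n) 1 with hk'def
    have hk'' : k' + Finsupp.single (Fin.last n) 1 = k :=
      single_le_cancel (by omega)
    have hk'last : k' (Fin.last n) ≤ m := by
      rw [hk'def]
      simp only [Finsupp.coe_tsub, Pi.sub_apply, Finsupp.single_apply, if_pos rfl, if_true]
      omega
    have h1 := part1 i j k' hk'last
    rw [fpderiv_apply, hk''] at h1
    have h2 : (k' (Fin.last n) + 1) • ((T i * T j - T j * T i) k) = 0 := h1
    letI : Module ℚ (Module.End R H) := Module.compHom _ (algebraMap ℚ R)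
    have h3 : ((k' (Fin.last n) + 1 : ℕ) : ℚ) • ((T i * T j - T j * T i) k) = 0 := by
      rw [Nat.cast_smul_eq_nsmul]; exact h2
    have h4 := congrArg (fun y => (((k' (Fin.last n) + 1 : ℕ) : ℚ))⁻¹ • y) h3
    simp only [smul_smul, smul_zero] at h4
    have hne : ((k' (Fin.last n) + 1 : ℕ) : ℚ) ≠ 0 := by
      exact_mod_cast Nat.succ_ne_zero (k' (Fin.last n))
    rw [inv_mul_cancel₀ hne, one_smul] at h4
    exact h4
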